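/- arXiv:1508.05507 — 2 statements merged into one kernel-verified Lean document; each statement's English description precedes it below -/
import Mathlib

section
/- Let m, n ≥ 1 be integers, v ∈ ℝⁿ, and A a real n × m matrix. Let M be the (m+n) × (m+1) real matrix written in block form as M = [[0_{m×1}, I_m], [v, A]], i.e. its first column is (0,…,0, v₁,…,v_n)ᵀ and for j = 1,…,m its (j+1)-th column is (e_j, A e_j) where e_j is the j-th standard basis vector of ℝ^m. Then det(Mᵀ M) ≤ ‖v‖² · (1 + ‖A‖_F²)^m, where ‖v‖ is the Euclidean norm and ‖A‖_F is the Frobenius norm of A. In particular, if ‖A‖_F ≤ 1 then √(det(Mᵀ M)) ≤ 2^{m/2} ‖v‖. -/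
open Matrix

lemma aux_det_one_add_le {m : ℕ} {B : Matrix (Fin m) (Fin m) ℝ} (hB : B.PosSemidef) :
    (1 + B).det ≤ (1 + B.trace) ^ m := by
  have hH : B.IsHermitian := hB.1
  set μ : Fin m → ℝ := hH.eigenvalues with hμ
  set V : Matrix (Fin m) (Fin m) ℝ := (hH.eigenvectorUnitary : Matrix (Fin m) (Fin m) ℝ) with hV
  have hVV : V * star V = 1 := (Matrix.mem_unitaryGroup_iff).mp hH.eigenvectorUnitary.2
  have hVV' : star V * V = 1 := (Matrix.mem_unitaryGroup_iff').mp hH.eigenvectorUnitary.2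
  have hspec : B = V * Matrix.diagonal μ * star V := by
    exact hH.spectral_theorem
  have h1 : (1 : Matrix (Fin m) (Fin m) ℝ) + B = V * Matrix.diagonal (fun i => 1 + μ i) * star V := by
    have hdg : Matrix.diagonal (fun i : Fin m => 1 + μ i) = 1 + Matrix.diagonal μ := by
      rw [← Matrix.diagonal_one, ← Matrix.diagonal_add]
    rw [hdg, Matrix.mul_add, Matrix.mul_one, Matrix.add_mul, hVV, ← hspec]
  have hdet : (1 + B).det = ∏ i, (1 + μ i) := by
    rw [h1, Matrix.det_mul_right_comm, hVV, Matrix.one_mul, Matrix.det_diagonal]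
  have htr : B.trace = ∑ i, μ i := by
    conv_lhs => rw [hspec]
    rw [Matrix.trace_mul_comm, ← Matrix.mul_assoc, hVV', Matrix.one_mul, Matrix.trace_diagonal]
  have hnn : ∀ i, 0 ≤ μ i := fun i => hB.eigenvalues_nonneg i
  rw [hdet, htr]
  calc ∏ i, (1 + μ i) ≤ ∏ _i : Fin m, (1 + ∑ j, μ j) := by
        refine Finset.prod_le_prod (fun i _ => by linarith [hnn i]) (fun i _ => ?_)
        have : μ i ≤ ∑ j, μ j := Finset.single_le_sum (fun j _ => hnn j) (Finset.mem_univ i)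
        linarith
    _ = (1 + ∑ j, μ j) ^ m := by
        rw [Finset.prod_const, Finset.card_univ, Fintype.card_fin]

lemma aux_quad_nonneg {m : ℕ} {C : Matrix (Fin m) (Fin m) ℝ} (hC : C.PosSemidef)
    (Y : Matrix (Fin m) (Fin 1) ℝ) : 0 ≤ (Yᵀ * C * Y : Matrix (Fin 1) (Fin 1) ℝ) 0 0 := by
  have hP : (Yᴴ * C * Y).PosSemidef := hC.conjTranspose_mul_mul_same Y
  rw [Matrix.conjTranspose_eq_transpose_of_trivial] at hP
  have h := hP.dotProduct_mulVec_nonneg (Pi.single 0 1)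
  simpa [Matrix.mulVec, dotProduct, Pi.single_apply] using h

/-- For the `(m+n) × (m+1)` block matrix `M = [[0, I_m], [v, A]]` one has
`det(MᵀM) ≤ ‖v‖² (1 + ‖A‖_F²)^m`; in particular, if `‖A‖_F ≤ 1` then
`√(det(MᵀM)) ≤ 2^{m/2} ‖v‖`. -/
theorem statement_2 (m n : ℕ) (hm : 1 ≤ m) (hn : 1 ≤ n) (v : Fin n → ℝ)
    (A : Matrix (Fin n) (Fin m) ℝ) :
    let M : Matrix (Fin m ⊕ Fin n) (Fin 1 ⊕ Fin m) ℝ :=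
      Matrix.fromBlocks 0 1 (Matrix.of fun i _ => v i) A
    (Mᵀ * M).det ≤ (∑ i, v i ^ 2) * (1 + ∑ i, ∑ j, A i j ^ 2) ^ m ∧
      (Real.sqrt (∑ i, ∑ j, A i j ^ 2) ≤ 1 →
        Real.sqrt ((Mᵀ * M).det) ≤ (2 : ℝ) ^ ((m : ℝ) / 2) * Real.sqrt (∑ i, v i ^ 2)) := by
  intro M
  set w : Matrix (Fin n) (Fin 1) ℝ := Matrix.of (fun i _ => v i) with hwdef
  have hfrob : (Aᵀ * A).trace = ∑ i, ∑ j, A i j ^ 2 := by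
    rw [Finset.sum_comm]
    simp [Matrix.trace, Matrix.diag, Matrix.mul_apply, sq]
  have hBpsd : (Aᵀ * A).PosSemidef := by
    have := Matrix.posSemidef_conjTranspose_mul_self A
    rwa [Matrix.conjTranspose_eq_transpose_of_trivial] at this
  have hD : (1 + Aᵀ * A).PosDef := Matrix.PosDef.add_posSemidef Matrix.PosDef.one hBpsd
  haveI := hD.isUnit.invertible
  have hMM : Mᵀ * M = Matrix.fromBlocks (wᵀ * w) (wᵀ * A) (Aᵀ * w) (1 + Aᵀ * A) := by
    show (Matrix.fromBlocks 0 1 w A)ᵀ * Matrix.fromBlocks 0 1 w A = _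
    rw [Matrix.fromBlocks_transpose, Matrix.fromBlocks_multiply]
    simp
  have hdet : (Mᵀ * M).det
      = (1 + Aᵀ * A).det * ((wᵀ * w) 0 0 - ((wᵀ * A) * ⅟(1 + Aᵀ * A) * (Aᵀ * w) : Matrix (Fin 1) (Fin 1) ℝ) 0 0) := by
    rw [hMM, Matrix.det_fromBlocks₂₂, Matrix.det_fin_one, Matrix.sub_apply]
  have hw : (wᵀ * w) 0 0 = ∑ i, v i ^ 2 := by
    simp [Matrix.mul_apply, hwdef, sq]
  have hXnn : 0 ≤ ((wᵀ * A) * ⅟(1 + Aᵀ * A) * (Aᵀ * w) : Matrix (Fin 1) (Fin 1) ℝ) 0 0 := by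
    rw [invOf_eq_nonsing_inv]
    have hwA : wᵀ * A = (Aᵀ * w)ᵀ := by
      rw [Matrix.transpose_mul, Matrix.transpose_transpose]
    rw [hwA]
    exact aux_quad_nonneg hD.inv.posSemidef (Aᵀ * w)
  have hS : (0:ℝ) ≤ ∑ i, v i ^ 2 := by positivity
  have hdetD : (1 + Aᵀ * A).det ≤ (1 + ∑ i, ∑ j, A i j ^ 2) ^ m := by
    have := aux_det_one_add_le hBpsd
    rwa [hfrob] at this
  have part1 : (Mᵀ * M).det ≤ (∑ i, v i ^ 2) * (1 + ∑ i, ∑ j, A i j ^ 2) ^ m := by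
    rw [hdet, hw]
    calc (1 + Aᵀ * A).det * ((∑ i, v i ^ 2) - ((wᵀ * A) * ⅟(1 + Aᵀ * A) * (Aᵀ * w) : Matrix (Fin 1) (Fin 1) ℝ) 0 0)
        ≤ (1 + Aᵀ * A).det * (∑ i, v i ^ 2) :=
          mul_le_mul_of_nonneg_left (by linarith) hD.det_pos.le
      _ ≤ (1 + ∑ i, ∑ j, A i j ^ 2) ^ m * (∑ i, v i ^ 2) :=
          mul_le_mul_of_nonneg_right hdetD hS
      _ = (∑ i, v i ^ 2) * (1 + ∑ i, ∑ j, A i j ^ 2) ^ m := mul_comm _ _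
  refine ⟨part1, fun hA1 => ?_⟩
  have h0 : (0:ℝ) ≤ ∑ i, ∑ j, A i j ^ 2 := by positivity
  have hfrob_le : ∑ i, ∑ j, A i j ^ 2 ≤ 1 := by
    nlinarith [Real.mul_self_sqrt h0, Real.sqrt_nonneg (∑ i, ∑ j, A i j ^ 2)]
  have hd2 : (Mᵀ * M).det ≤ (∑ i, v i ^ 2) * 2 ^ m := by
    refine part1.trans (mul_le_mul_of_nonneg_left (pow_le_pow_left₀ (by linarith) (by linarith) m) hS)
  calc Real.sqrt ((Mᵀ * M).det) ≤ Real.sqrt ((∑ i, v i ^ 2) * 2 ^ m) := Real.sqrt_le_sqrt hd2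
    _ = (2 : ℝ) ^ ((m : ℝ) / 2) * Real.sqrt (∑ i, v i ^ 2) := by
        rw [Real.sqrt_mul hS, mul_comm]
        congr 1
        rw [Real.sqrt_eq_rpow, ← Real.rpow_natCast 2 m, ← Real.rpow_mul (by norm_num : (0:ℝ) ≤ 2)]
        norm_num
        ring_nf
end

section
/- Let m, n ≥ 1 be integers, L > 0, and let F, G : ℝ^m → ℝⁿ be Lipschitz maps with Lipschitz constants at most L. Define H : ℝ × ℝ^m → ℝ^{m+n} by H(t,x) = (x, t F(x) + (1−t) G(x)). Then H is Lipschitz, hence differentiable almost everywhere, and there is a constant C depending only on m, n and L such that ∫_{(0,1) × B_s} √(det(DH(t,x)ᵀ ∘ DH(t,x))) dt dx ≤ C ∫_{B_s} ‖F(x) − G(x)‖ dx for every ball B_s ⊂ ℝ^m, where DH(t,x) : ℝ^{1+m} → ℝ^{m+n} denotes the Fréchet differential of H (defined for almost every (t,x)) and det(DHᵀ∘DH) its Gram determinant with respect to the standard bases. -/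
open MeasureTheory Matrix

/-- The affine homotopy `H(t,x) = (x, t F(x) + (1−t) G(x))` between the graphs of `F`
and `G`. -/
noncomputable def affineHomotopy (m n : ℕ)
    (F G : EuclideanSpace ℝ (Fin m) → EuclideanSpace ℝ (Fin n)) :
    ℝ × EuclideanSpace ℝ (Fin m) → EuclideanSpace ℝ (Fin m) × EuclideanSpace ℝ (Fin n) :=
  fun p => (p.2, p.1 • F p.2 + (1 - p.1) • G p.2)

/-- The Gram Jacobian `√(det(DH(t,x)ᵀ ∘ DH(t,x)))` of a map
`H : ℝ × ℝ^m → ℝ^m × ℝ^n`, computed from the matrix of the Fréchet differential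
`DH(t,x)` with respect to the standard bases. -/
noncomputable def gramJacobian (m n : ℕ)
    (H : ℝ × EuclideanSpace ℝ (Fin m) → EuclideanSpace ℝ (Fin m) × EuclideanSpace ℝ (Fin n))
    (p : ℝ × EuclideanSpace ℝ (Fin m)) : ℝ :=
  let D := fderiv ℝ H p
  let basis : Unit ⊕ Fin m → ℝ × EuclideanSpace ℝ (Fin m) :=
    Sum.elim (fun _ => ((1 : ℝ), 0)) (fun j => ((0 : ℝ), EuclideanSpace.single j 1))
  let M : Matrix (Fin m ⊕ Fin n) (Unit ⊕ Fin m) ℝ :=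
    Matrix.of fun i j =>
      Sum.elim (fun i₁ => (D (basis j)).1 i₁) (fun i₂ => (D (basis j)).2 i₂) i
  Real.sqrt ((Mᵀ * M).det)

namespace St3Aux

variable {m n : ℕ}

/-- the constant -/
noncomputable def cst (m : ℕ) (L : NNReal) : ℝ :=
  Real.sqrt ((Nat.factorial (1 + m) : ℝ) * (2 * max 1 (L : ℝ) ^ 2) ^ (1 + m))

lemma cst_pos (m : ℕ) (L : NNReal) : 0 < cst m L := by
  apply Real.sqrt_pos.2
  positivity

lemma pointwise (L : NNReal)
    (F G : EuclideanSpace ℝ (Fin m) → EuclideanSpace ℝ (Fin n))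
    (hF : LipschitzWith L F) (hG : LipschitzWith L G) (t : ℝ) (ht0 : 0 ≤ t) (ht1 : t ≤ 1)
    (x : EuclideanSpace ℝ (Fin m)) :
    gramJacobian m n (affineHomotopy m n F G) (t, x) ≤ cst m L * ‖F x - G x‖ := by
  classical
  have _dummy : True := trivial
  set H := affineHomotopy m n F G with hH
  set D := fderiv ℝ H (t, x) with hD
  set bas : Unit ⊕ Fin m → ℝ × EuclideanSpace ℝ (Fin m) :=
    Sum.elim (fun _ => ((1 : ℝ), 0)) (fun j => ((0 : ℝ), EuclideanSpace.single j 1)) with hbas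
  set M : Matrix (Fin m ⊕ Fin n) (Unit ⊕ Fin m) ℝ :=
    Matrix.of fun i j =>
      Sum.elim (fun i₁ => (D (bas j)).1 i₁) (fun i₂ => (D (bas j)).2 i₂) i with hM
  have hgj : gramJacobian m n H (t, x) = Real.sqrt ((Mᵀ * M).det) := rfl
  rw [hgj]
  have hCpos := cst_pos m L
  by_cases hd : DifferentiableAt ℝ H (t, x)
  · -- compute the t-column
    have hcol : D ((1 : ℝ), (0 : EuclideanSpace ℝ (Fin m))) = ((0 : EuclideanSpace ℝ (Fin m)), F x - G x) := by
      have hc : HasDerivAt (fun s : ℝ => ((s, x) : ℝ × EuclideanSpace ℝ (Fin m))) ((1 : ℝ), (0 : EuclideanSpace ℝ (Fin m))) t :=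
        HasDerivAt.prodMk (hasDerivAt_id t) (hasDerivAt_const t x)
      have h1 : HasDerivAt (fun s : ℝ => H (s, x)) (D ((1 : ℝ), (0 : EuclideanSpace ℝ (Fin m)))) t :=
        by have := HasFDerivAt.comp_hasDerivAt t hd.hasFDerivAt hc; exact this
      have h2 : HasDerivAt (fun s : ℝ => H (s, x)) (((0 : EuclideanSpace ℝ (Fin m)), F x - G x)) t := by
        have heq : (fun s : ℝ => H (s, x))
            = fun s : ℝ => ((x : EuclideanSpace ℝ (Fin m)), s • F x + (1 - s) • G x) := rfl
        rw [heq]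
        refine HasDerivAt.prodMk (hasDerivAt_const t x) ?_
        have ha : HasDerivAt (fun s : ℝ => s • F x) ((1 : ℝ) • F x) t :=
          (hasDerivAt_id t).smul_const (F x)
        have hb : HasDerivAt (fun s : ℝ => (1 - s) • G x) ((-1 : ℝ) • G x) t := by
          have := ((hasDerivAt_id t).const_sub (1 : ℝ)).smul_const (G x)
          simpa using this
        have := ha.add hb
        simpa [sub_eq_add_neg, Pi.add_def] using this
      exact h1.unique h2
    -- bound for the x-columns
    have hxcol : ∀ j : Fin m,
        ‖D ((0 : ℝ), (EuclideanSpace.single j 1 : EuclideanSpace ℝ (Fin m)))‖ ≤ max 1 (L : ℝ) := by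
      intro j
      set J : EuclideanSpace ℝ (Fin m) →L[ℝ] ℝ × EuclideanSpace ℝ (Fin m) := (0 : EuclideanSpace ℝ (Fin m) →L[ℝ] ℝ).prod (ContinuousLinearMap.id ℝ (EuclideanSpace ℝ (Fin m))) with hJ
      have hcj : HasFDerivAt (fun y : EuclideanSpace ℝ (Fin m) => ((t, y) : ℝ × EuclideanSpace ℝ (Fin m))) J x :=
        HasFDerivAt.prodMk (hasFDerivAt_const t x) (hasFDerivAt_id x)
      have hg : HasFDerivAt (fun y : EuclideanSpace ℝ (Fin m) => H (t, y)) (D.comp J) x :=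
        hd.hasFDerivAt.comp x hcj
      have hgl : LipschitzWith (max 1 L) (fun y : EuclideanSpace ℝ (Fin m) => H (t, y)) := by
        have h2' : LipschitzWith L (fun y : EuclideanSpace ℝ (Fin m) => t • F y + (1 - t) • G y) := by
          apply LipschitzWith.of_dist_le_mul
          intro y y'
          have h1t : (0:ℝ) ≤ 1 - t := by linarith
          calc dist (t • F y + (1 - t) • G y) (t • F y' + (1 - t) • G y')
              = ‖t • (F y - F y') + (1 - t) • (G y - G y')‖ := by
                rw [dist_eq_norm]; congr 1; module
            _ ≤ ‖t • (F y - F y')‖ + ‖(1 - t) • (G y - G y')‖ := norm_add_le _ _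
            _ = t * ‖F y - F y'‖ + (1 - t) * ‖G y - G y'‖ := by
                rw [norm_smul, norm_smul, Real.norm_of_nonneg ht0, Real.norm_of_nonneg h1t]
            _ ≤ t * ((L : ℝ) * dist y y') + (1 - t) * ((L : ℝ) * dist y y') := by
                gcongr
                · rw [← dist_eq_norm]; exact hF.dist_le_mul y y'
                · rw [← dist_eq_norm]; exact hG.dist_le_mul y y'
            _ = (L : ℝ) * dist y y' := by ring
        have := LipschitzWith.prodMk (LipschitzWith.id (α := EuclideanSpace ℝ (Fin m))) h2'
        exact this
      have hnorm : ‖D.comp J‖ ≤ (max 1 (L : ℝ)) := by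
        have h := norm_fderiv_le_of_lipschitz ℝ hgl (x₀ := x)
        rw [hg.fderiv] at h
        simpa using h
      have happ : D ((0 : ℝ), (EuclideanSpace.single j 1 : EuclideanSpace ℝ (Fin m))) =
          (D.comp J) (EuclideanSpace.single j 1) := by
        rw [ContinuousLinearMap.comp_apply, hJ]
        congr 1
      rw [happ]
      calc ‖(D.comp J) (EuclideanSpace.single j 1)‖
          ≤ ‖D.comp J‖ * ‖(EuclideanSpace.single j 1 : EuclideanSpace ℝ (Fin m))‖ := (D.comp J).le_opNorm _
        _ ≤ max 1 (L : ℝ) * 1 := by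
            gcongr
            rw [EuclideanSpace.norm_single]; simp
        _ = max 1 (L : ℝ) := mul_one _
    -- determinant estimate
    set Kr : ℝ := max 1 (L : ℝ) with hKr
    have hKr1 : (1 : ℝ) ≤ Kr := le_max_left _ _
    set B : ℝ := 2 * Kr ^ 2 with hBdef
    have hB1 : (1 : ℝ) ≤ B := by nlinarith
    have normsq : ∀ (k : ℕ) (u : EuclideanSpace ℝ (Fin k)), ∑ i, (u i) ^ 2 = ‖u‖ ^ 2 := by
      intro k u
      rw [EuclideanSpace.norm_eq, Real.sq_sqrt (by positivity)]
      simp [sq_abs]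
    have hMinl : ∀ i, M i (Sum.inl ()) =
        Sum.elim (fun _ : Fin m => (0 : ℝ)) (fun i₂ => (F x - G x) i₂) i := by
      intro i
      rcases i with i₁ | i₂ <;> simp [hM, hbas, hcol]
    have hsum_inl : ∑ i, (M i (Sum.inl ())) ^ 2 = ‖F x - G x‖ ^ 2 := by
      rw [Fintype.sum_sum_type]
      have h1 : ∀ i₁ : Fin m, (M (Sum.inl i₁) (Sum.inl ())) ^ 2 = 0 := by
        intro i₁; rw [hMinl]; simp
      have h2 : ∀ i₂ : Fin n, (M (Sum.inr i₂) (Sum.inl ())) ^ 2 = ((F x - G x) i₂) ^ 2 := by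
        intro i₂; rw [hMinl]; rfl
      rw [Finset.sum_congr rfl fun i _ => h1 i, Finset.sum_congr rfl fun i _ => h2 i]
      rw [normsq n (F x - G x)]
      simp
    have hsum_inr : ∀ j : Fin m, ∑ i, (M i (Sum.inr j)) ^ 2 ≤ B := by
      intro j
      set v := D ((0 : ℝ), (EuclideanSpace.single j 1 : EuclideanSpace ℝ (Fin m))) with hv
      have hv1 : ‖v.1‖ ≤ Kr := le_trans (norm_fst_le v) (hxcol j)
      have hv2 : ‖v.2‖ ≤ Kr := le_trans (norm_snd_le v) (hxcol j)
      have e1 : ∑ i₁ : Fin m, (M (Sum.inl i₁) (Sum.inr j)) ^ 2 = ‖v.1‖ ^ 2 := by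
        rw [← normsq m v.1]
        exact Finset.sum_congr rfl fun i _ => rfl
      have e2 : ∑ i₂ : Fin n, (M (Sum.inr i₂) (Sum.inr j)) ^ 2 = ‖v.2‖ ^ 2 := by
        rw [← normsq n v.2]
        exact Finset.sum_congr rfl fun i _ => rfl
      rw [Fintype.sum_sum_type, e1, e2]
      rw [hBdef]
      have b1 : ‖v.1‖ ^ 2 ≤ Kr ^ 2 := pow_le_pow_left₀ (norm_nonneg _) hv1 2
      have b2 : ‖v.2‖ ^ 2 ≤ Kr ^ 2 := pow_le_pow_left₀ (norm_nonneg _) hv2 2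
      linarith
    clear_value M D bas Kr B
    by_cases hu : F x - G x = 0
    · have hz : ∀ i, M i (Sum.inl ()) = 0 := by
        intro i; rw [hMinl, hu]; rcases i with i₁ | i₂ <;> simp
      have hcolz : ∀ j, (Mᵀ * M) j (Sum.inl ()) = 0 := by
        intro j
        simp only [Matrix.mul_apply, Matrix.transpose_apply]
        exact Finset.sum_eq_zero fun i _ => by rw [hz]; ring
      rw [Matrix.det_eq_zero_of_column_eq_zero (Sum.inl ()) hcolz, Real.sqrt_zero]
      positivity
    · set r : ℝ := ‖F x - G x‖ with hrdef
      have hr : 0 < r := norm_pos_iff.2 hu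
      set d : Unit ⊕ Fin m → ℝ := Sum.elim (fun _ => r) (fun _ => 1) with hd'
      have hdne : ∀ j, d j ≠ 0 := by
        intro j; rcases j with j | j <;> simp [hd', hr.ne']
      set N : Matrix (Fin m ⊕ Fin n) (Unit ⊕ Fin m) ℝ :=
        Matrix.of (fun i j => M i j / d j) with hN
      have hMN : M = N * Matrix.diagonal d := by
        ext i j
        rw [Matrix.mul_diagonal]
        simp only [hN, Matrix.of_apply]
        field_simp [hdne j]
      have hprodd : ∏ j, d j = r := by
        rw [Fintype.prod_sum_type]
        simp [hd']
      have hdet : (Mᵀ * M).det = r ^ 2 * (Nᵀ * N).det := by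
        rw [hMN, Matrix.transpose_mul, Matrix.diagonal_transpose]
        rw [show Matrix.diagonal d * Nᵀ * (N * Matrix.diagonal d)
            = Matrix.diagonal d * (Nᵀ * N) * Matrix.diagonal d by
          rw [← Matrix.mul_assoc, ← Matrix.mul_assoc]]
        rw [Matrix.det_mul, Matrix.det_mul, Matrix.det_diagonal, hprodd]
        ring
      have hNsum : ∀ j, ∑ i, (N i j) ^ 2 ≤ B := by
        intro j
        rcases j with j | j
        · have : ∑ i, (N i (Sum.inl j)) ^ 2 = (∑ i, (M i (Sum.inl ())) ^ 2) / r ^ 2 := by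
            rw [Finset.sum_div]
            refine Finset.sum_congr rfl fun i _ => ?_
            simp only [hN, Matrix.of_apply, hd', div_pow]
            congr 1
          rw [this, hsum_inl, div_self (by positivity)]
          exact hB1
        · have : ∀ i, N i (Sum.inr j) = M i (Sum.inr j) := by
            intro i; simp [hN, hd']
          calc ∑ i, (N i (Sum.inr j)) ^ 2 = ∑ i, (M i (Sum.inr j)) ^ 2 :=
                Finset.sum_congr rfl fun i _ => by rw [this]
            _ ≤ B := hsum_inr j
      clear_value N d r
      have hent : ∀ j k, |(Nᵀ * N) j k| ≤ B := by
        intro j k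
        have hjk : (Nᵀ * N) j k = ∑ i, N i j * N i k := by
          simp [Matrix.mul_apply, Matrix.transpose_apply]
        have hcs := Finset.sum_mul_sq_le_sq_mul_sq Finset.univ (fun i => N i j) (fun i => N i k)
        have h1 := hNsum j
        have h2 := hNsum k
        have hs1 : (0 : ℝ) ≤ ∑ i, (N i j) ^ 2 := Finset.sum_nonneg fun i _ => sq_nonneg _
        have hs2 : (0 : ℝ) ≤ ∑ i, (N i k) ^ 2 := Finset.sum_nonneg fun i _ => sq_nonneg _
        rw [hjk]
        have hBnn : (0 : ℝ) ≤ B := le_trans zero_le_one hB1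
        have hsq : (∑ i, N i j * N i k) ^ 2 ≤ B ^ 2 := by
          calc (∑ i, N i j * N i k) ^ 2 ≤ (∑ i, (N i j) ^ 2) * ∑ i, (N i k) ^ 2 := hcs
            _ ≤ B * B := mul_le_mul h1 h2 hs2 hBnn
            _ = B ^ 2 := (sq B).symm
        calc |∑ i, N i j * N i k| = Real.sqrt ((∑ i, N i j * N i k) ^ 2) :=
              (Real.sqrt_sq_eq_abs _).symm
          _ ≤ Real.sqrt (B ^ 2) := Real.sqrt_le_sqrt hsq
          _ = B := Real.sqrt_sq hBnn
      have hcard : Fintype.card (Unit ⊕ Fin m) = 1 + m := by simp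
      have hdetle : (Nᵀ * N).det ≤ (Nat.factorial (1 + m) : ℝ) * B ^ (1 + m) := by
        have habs := Matrix.det_le (A := Nᵀ * N) (abv := (AbsoluteValue.abs : AbsoluteValue ℝ ℝ))
          (x := B) (fun i j => hent i j)
        rw [hcard] at habs
        calc (Nᵀ * N).det ≤ |(Nᵀ * N).det| := le_abs_self _
          _ ≤ Nat.factorial (1 + m) • B ^ (1 + m) := habs
          _ = (Nat.factorial (1 + m) : ℝ) * B ^ (1 + m) := nsmul_eq_mul _ _
      calc Real.sqrt ((Mᵀ * M).det) = Real.sqrt (r ^ 2 * (Nᵀ * N).det) := by rw [hdet]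
        _ ≤ Real.sqrt (r ^ 2 * ((Nat.factorial (1 + m) : ℝ) * B ^ (1 + m))) := by
            apply Real.sqrt_le_sqrt
            exact mul_le_mul_of_nonneg_left hdetle (sq_nonneg r)
        _ = r * cst m L := by
            rw [Real.sqrt_mul (sq_nonneg r), Real.sqrt_sq hr.le, cst, hBdef, hKr]
        _ = cst m L * r := mul_comm _ _
  · -- not differentiable: fderiv is 0
    have hD0 : D = 0 := fderiv_zero_of_not_differentiableAt hd
    have hM0 : M = 0 := by
      ext i j
      rcases i with i₁ | i₂ <;> simp [hM, hD0]
    rw [hM0]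
    simp only [Matrix.transpose_zero, Matrix.zero_mul, Matrix.det_zero]
    rw [Real.sqrt_zero]
    positivity

end St3Aux

lemma prodadd_lip {V : Type*} [SeminormedAddCommGroup V] :
    LipschitzWith 2 (fun v : V × V => v.1 + v.2) := by
  apply LipschitzWith.of_dist_le_mul
  intro p q
  have h1 : dist p.1 q.1 ≤ dist p q := le_trans (le_max_left _ _) (le_of_eq (Prod.dist_eq).symm)
  have h2 : dist p.2 q.2 ≤ dist p q := le_trans (le_max_right _ _) (le_of_eq (Prod.dist_eq).symm)
  calc dist (p.1 + p.2) (q.1 + q.2) ≤ dist p.1 q.1 + dist p.2 q.2 := dist_add_add_le _ _ _ _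
    _ ≤ 2 * dist p q := by push_cast; linarith

lemma aux_smul {m n : ℕ} {L : NNReal}
    {F : EuclideanSpace ℝ (Fin m) → EuclideanSpace ℝ (Fin n)} (hF : LipschitzWith L F)
    (a b : ℝ) :
    LocallyLipschitz (fun p : ℝ × EuclideanSpace ℝ (Fin m) => (a * p.1 + b) • F p.2) := by
  intro p₀
  set R : ℝ := |a| * (|p₀.1| + 1) + |b| with hR
  set Mf : ℝ := ‖F p₀.2‖ + (L : ℝ) with hMf
  have hRnn : 0 ≤ R := by positivity
  have hMfnn : 0 ≤ Mf := by positivity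
  refine ⟨(R * (L : ℝ) + |a| * Mf).toNNReal, Metric.ball p₀ 1,
    Metric.ball_mem_nhds _ one_pos, ?_⟩
  apply LipschitzOnWith.of_dist_le_mul
  intro p hp q hq
  rw [Real.coe_toNNReal _ (by positivity)]
  have hd1 : dist p.1 q.1 ≤ dist p q := le_trans (le_max_left _ _) (le_of_eq (Prod.dist_eq).symm)
  have hd2 : dist p.2 q.2 ≤ dist p q := le_trans (le_max_right _ _) (le_of_eq (Prod.dist_eq).symm)
  have hp1 : |p.1| ≤ |p₀.1| + 1 := by
    have : dist p.1 p₀.1 ≤ dist p p₀ := le_trans (le_max_left _ _) (le_of_eq (Prod.dist_eq).symm)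
    have hb : dist p p₀ < 1 := Metric.mem_ball.1 hp
    have := abs_sub_abs_le_abs_sub p.1 p₀.1
    rw [Real.dist_eq] at *
    linarith
  have hcoef : |a * p.1 + b| ≤ R := by
    rw [hR]
    calc |a * p.1 + b| ≤ |a * p.1| + |b| := abs_add_le _ _
      _ = |a| * |p.1| + |b| := by rw [abs_mul]
      _ ≤ |a| * (|p₀.1| + 1) + |b| := by gcongr
  have hFq : ‖F q.2‖ ≤ Mf := by
    have hb : dist q p₀ < 1 := Metric.mem_ball.1 hq
    have hd : dist q.2 p₀.2 ≤ dist q p₀ :=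
      le_trans (le_max_right _ _) (le_of_eq (Prod.dist_eq).symm)
    have hL := hF.dist_le_mul q.2 p₀.2
    have h1 : ‖F q.2‖ ≤ ‖F p₀.2‖ + dist (F q.2) (F p₀.2) := by
      rw [dist_eq_norm]
      have := norm_sub_norm_le (F q.2) (F p₀.2)
      linarith
    have h2 : (L : ℝ) * dist q.2 p₀.2 ≤ (L : ℝ) * 1 := by
      have : dist q.2 p₀.2 ≤ 1 := le_of_lt (lt_of_le_of_lt hd hb)
      exact mul_le_mul_of_nonneg_left this L.coe_nonneg
    rw [hMf]
    nlinarith [hL]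
  calc dist ((a * p.1 + b) • F p.2) ((a * q.1 + b) • F q.2)
      = ‖(a * p.1 + b) • (F p.2 - F q.2) + (a * (p.1 - q.1)) • F q.2‖ := by
        rw [dist_eq_norm]; congr 1; module
    _ ≤ ‖(a * p.1 + b) • (F p.2 - F q.2)‖ + ‖(a * (p.1 - q.1)) • F q.2‖ := norm_add_le _ _
    _ = |a * p.1 + b| * ‖F p.2 - F q.2‖ + |a| * |p.1 - q.1| * ‖F q.2‖ := by
        rw [norm_smul, norm_smul, Real.norm_eq_abs, Real.norm_eq_abs, abs_mul, abs_sub_comm]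
    _ ≤ R * ((L : ℝ) * dist p q) + |a| * dist p q * Mf := by
        have hFL : ‖F p.2 - F q.2‖ ≤ (L : ℝ) * dist p q := by
          have := hF.dist_le_mul p.2 q.2
          rw [dist_eq_norm] at this
          calc ‖F p.2 - F q.2‖ ≤ (L : ℝ) * dist p.2 q.2 := this
            _ ≤ (L : ℝ) * dist p q := mul_le_mul_of_nonneg_left hd2 L.coe_nonneg
        have habs : |p.1 - q.1| ≤ dist p q := by rw [← Real.dist_eq]; exact hd1
        have t1 : |a * p.1 + b| * ‖F p.2 - F q.2‖ ≤ R * ((L : ℝ) * dist p q) :=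
          mul_le_mul hcoef hFL (norm_nonneg _) hRnn
        have t2 : |a| * |p.1 - q.1| * ‖F q.2‖ ≤ |a| * dist p q * Mf := by
          apply mul_le_mul _ hFq (norm_nonneg _) (by positivity)
          exact mul_le_mul_of_nonneg_left habs (abs_nonneg _)
        linarith
    _ = (R * (L : ℝ) + |a| * Mf) * dist p q := by ring

lemma homotopy_locallyLipschitz {m n : ℕ} {L : NNReal}
    {F G : EuclideanSpace ℝ (Fin m) → EuclideanSpace ℝ (Fin n)}
    (hF : LipschitzWith L F) (hG : LipschitzWith L G) :
    LocallyLipschitz (affineHomotopy m n F G) := by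
  have h1 := aux_smul hF 1 0
  have h2 := aux_smul hG (-1) 1
  have hsum : LocallyLipschitz (fun p : ℝ × EuclideanSpace ℝ (Fin m) =>
      (1 * p.1 + 0) • F p.2 + ((-1) * p.1 + 1) • G p.2) :=
    (prodadd_lip.locallyLipschitz).comp (h1.prodMk h2)
  have hsnd : LocallyLipschitz (fun p : ℝ × EuclideanSpace ℝ (Fin m) => p.2) :=
    LipschitzWith.locallyLipschitz (LipschitzWith.of_dist_le_mul fun p q => by
      rw [NNReal.coe_one, one_mul]
      exact le_trans (le_max_right _ _) (le_of_eq (Prod.dist_eq).symm))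
  have hprod := hsnd.prodMk hsum
  have heq : affineHomotopy m n F G = fun p : ℝ × EuclideanSpace ℝ (Fin m) =>
      (p.2, (1 * p.1 + 0) • F p.2 + ((-1) * p.1 + 1) • G p.2) := by
    funext p
    simp only [affineHomotopy]
    norm_num [sub_eq_neg_add]
  rw [heq]
  exact hprod

lemma gramJacobian_measurable (m n : ℕ)
    (H : ℝ × EuclideanSpace ℝ (Fin m) → EuclideanSpace ℝ (Fin m) × EuclideanSpace ℝ (Fin n)) :
    Measurable (gramJacobian m n H) := by
  classical
  have hfd : Measurable (fun p => fderiv ℝ H p) := measurable_fderiv ℝ H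
  have hφ : Continuous (fun D' : (ℝ × EuclideanSpace ℝ (Fin m)) →L[ℝ]
      (EuclideanSpace ℝ (Fin m) × EuclideanSpace ℝ (Fin n)) =>
      Real.sqrt ((((Matrix.of fun i j =>
        Sum.elim
          (fun i₁ => (D' (Sum.elim (fun _ : Unit => ((1 : ℝ), 0))
            (fun j' => ((0 : ℝ), EuclideanSpace.single j' 1)) j)).1 i₁)
          (fun i₂ => (D' (Sum.elim (fun _ : Unit => ((1 : ℝ), 0))
            (fun j' => ((0 : ℝ), EuclideanSpace.single j' 1)) j)).2 i₂) i :
        Matrix (Fin m ⊕ Fin n) (Unit ⊕ Fin m) ℝ))ᵀ *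
        (Matrix.of fun i j =>
        Sum.elim
          (fun i₁ => (D' (Sum.elim (fun _ : Unit => ((1 : ℝ), 0))
            (fun j' => ((0 : ℝ), EuclideanSpace.single j' 1)) j)).1 i₁)
          (fun i₂ => (D' (Sum.elim (fun _ : Unit => ((1 : ℝ), 0))
            (fun j' => ((0 : ℝ), EuclideanSpace.single j' 1)) j)).2 i₂) i)).det)) := by
    have hentry : Continuous (fun D' : (ℝ × EuclideanSpace ℝ (Fin m)) →L[ℝ]
        (EuclideanSpace ℝ (Fin m) × EuclideanSpace ℝ (Fin n)) =>
        (Matrix.of fun i j =>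
        Sum.elim
          (fun i₁ => (D' (Sum.elim (fun _ : Unit => ((1 : ℝ), 0))
            (fun j' => ((0 : ℝ), EuclideanSpace.single j' 1)) j)).1 i₁)
          (fun i₂ => (D' (Sum.elim (fun _ : Unit => ((1 : ℝ), 0))
            (fun j' => ((0 : ℝ), EuclideanSpace.single j' 1)) j)).2 i₂) i :
        Matrix (Fin m ⊕ Fin n) (Unit ⊕ Fin m) ℝ)) := by
      apply continuous_matrix
      intro i j
      rcases i with i₁ | i₂
      · exact (EuclideanSpace.proj i₁).continuous.comp
          (continuous_fst.comp (ContinuousLinearMap.apply ℝ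
            (EuclideanSpace ℝ (Fin m) × EuclideanSpace ℝ (Fin n)) _).continuous)
      · exact (EuclideanSpace.proj i₂).continuous.comp
          (continuous_snd.comp (ContinuousLinearMap.apply ℝ
            (EuclideanSpace ℝ (Fin m) × EuclideanSpace ℝ (Fin n)) _).continuous)
    exact Real.continuous_sqrt.comp
      ((Continuous.matrix_mul hentry.matrix_transpose hentry).matrix_det)
  exact hφ.measurable.comp hfd



/-- For Lipschitz maps `F, G : ℝ^m → ℝ^n` with Lipschitz constant at most
`L`, the homotopy `H(t,x) = (x, t F(x) + (1−t) G(x))` is Lipschitz (hence differentiable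
a.e.), and there is `C = C(m,n,L) > 0` with
`∫_{(0,1)×B_s} √(det(DHᵀ∘DH)) ≤ C ∫_{B_s} ‖F − G‖` for every ball `B_s ⊂ ℝ^m`. -/

theorem statement_3 (m n : ℕ) (hm : 1 ≤ m) (hn : 1 ≤ n) (L : NNReal) (hL : 0 < L) :
    (∀ (F G : EuclideanSpace ℝ (Fin m) → EuclideanSpace ℝ (Fin n)),
      LipschitzWith L F → LipschitzWith L G → LocallyLipschitz (affineHomotopy m n F G)) ∧
    ∃ C : ℝ, 0 < C ∧
      ∀ (F G : EuclideanSpace ℝ (Fin m) → EuclideanSpace ℝ (Fin n)),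
        LipschitzWith L F → LipschitzWith L G →
        ∀ (x₀ : EuclideanSpace ℝ (Fin m)) (s : ℝ), 0 < s →
          ∫ p in Set.Ioo (0 : ℝ) 1 ×ˢ Metric.ball x₀ s,
              gramJacobian m n (affineHomotopy m n F G) p
            ≤ C * ∫ x in Metric.ball x₀ s, ‖F x - G x‖ := by
  constructor
  · intro F G hF hG
    exact homotopy_locallyLipschitz hF hG
  refine ⟨St3Aux.cst m L, St3Aux.cst_pos m L, ?_⟩
  intro F G hF hG x₀ s hs
  set H := affineHomotopy m n F G with hH
  set S := Set.Ioo (0 : ℝ) 1 ×ˢ Metric.ball x₀ s with hS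
  have hSmeas : MeasurableSet S := measurableSet_Ioo.prod Metric.isOpen_ball.measurableSet
  set g : ℝ × EuclideanSpace ℝ (Fin m) → ℝ := fun p => St3Aux.cst m L * ‖F p.2 - G p.2‖ with hg
  have hgcont : Continuous g :=
    continuous_const.mul (((hF.continuous.sub hG.continuous).norm).comp continuous_snd)
  have hgint : IntegrableOn g S := by
    apply IntegrableOn.mono_set
      (hgcont.continuousOn.integrableOn_compact
        ((isCompact_Icc (a := (0:ℝ)) (b := 1)).prod (isCompact_closedBall x₀ s)))
    exact Set.prod_mono Set.Ioo_subset_Icc_self Metric.ball_subset_closedBall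
  have hJnonneg : ∀ p, 0 ≤ gramJacobian m n H p := fun p => Real.sqrt_nonneg _
  have hJle : ∀ p ∈ S, gramJacobian m n H p ≤ g p := by
    intro p hp
    have h1 : p.1 ∈ Set.Ioo (0 : ℝ) 1 := hp.1
    have := St3Aux.pointwise L F G hF hG p.1 h1.1.le h1.2.le p.2
    simpa using this
  have hJint : IntegrableOn (gramJacobian m n H) S := by
    apply Integrable.mono' hgint ((gramJacobian_measurable m n H).aestronglyMeasurable.restrict)
    filter_upwards [ae_restrict_mem hSmeas] with p hp
    rw [Real.norm_of_nonneg (hJnonneg p)]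
    exact hJle p hp
  calc ∫ p in S, gramJacobian m n H p ≤ ∫ p in S, g p :=
        setIntegral_mono_on hJint hgint hSmeas hJle
    _ = St3Aux.cst m L * ∫ x in Metric.ball x₀ s, ‖F x - G x‖ := by
        rw [hS, hg]
        rw [show (volume : Measure (ℝ × EuclideanSpace ℝ (Fin m)))
            = (volume : Measure ℝ).prod (volume : Measure (EuclideanSpace ℝ (Fin m))) from rfl]
        rw [MeasureTheory.setIntegral_prod _ (by
          rw [← MeasureTheory.Measure.volume_eq_prod]
          exact hgint)]
        have hinner : ∀ t : ℝ, ∫ x in Metric.ball x₀ s, St3Aux.cst m L * ‖F x - G x‖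
            = St3Aux.cst m L * ∫ x in Metric.ball x₀ s, ‖F x - G x‖ := by
          intro t
          exact MeasureTheory.integral_const_mul _ _
        simp only [hinner 0]
        rw [MeasureTheory.setIntegral_const]
        simp [Real.volume_Ioo]
end
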